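/- Let V be a finite type with n = |V| and let F be a nonempty superset-closed family of finsets of V. For every S ∈ F, the degree of S in the TAR graph of F is at least n − |S|, with equality if and only if S is a minimal member of F. Moreover, the minimum degree of the TAR graph of F equals n − X̄(F), where X̄(F) is the maximum cardinality of a minimal member of F. -/

import Mathlib

variable {V : Type*} [Fintype V] [DecidableEq V]

/-- A family of finsets is superset-closed if it is closed under taking supersets. -/
def SupersetClosed (F : Finset (Finset V)) : Prop :=
  ∀ ⦃S T : Finset V⦄, S ∈ F → S ⊆ T → T ∈ F

/-- A minimal member of a family: a member no proper subset of which is a member. -/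
def IsMinimalMem (F : Finset (Finset V)) (M : Finset V) : Prop :=
  M ∈ F ∧ ∀ M' : Finset V, M' ⊂ M → M' ∉ F

/-- The TAR graph of a family of finsets: vertices are the members of the family,
two members being adjacent iff their symmetric difference has exactly one element. -/
def TARGraph (F : Finset (Finset V)) : SimpleGraph {S : Finset V // S ∈ F} where
  Adj S T := (symmDiff S.1 T.1).card = 1
  symm := ⟨fun S T (h : (symmDiff S.1 T.1).card = 1) =>
    show (symmDiff T.1 S.1).card = 1 by rwa [symmDiff_comm] at h⟩
  loopless := ⟨fun S (h : (symmDiff S.1 S.1).card = 1) => by simp [symmDiff_self] at h⟩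

instance (F : Finset (Finset V)) : DecidableRel (TARGraph F).Adj :=
  fun S T => inferInstanceAs (Decidable ((symmDiff S.1 T.1).card = 1))

lemma symmDiff_f (S : Finset V) (v : V) :
    symmDiff S (if v ∈ S then S.erase v else insert v S) = {v} := by
  by_cases h : v ∈ S <;>
  · ext a
    by_cases ha : a = v <;>
      simp [h, ha, Finset.mem_symmDiff]

lemma exists_minimal {F : Finset (Finset V)} :
    ∀ S ∈ F, ∃ M, M ⊆ S ∧ IsMinimalMem F M := by
  classical
  intro S
  induction S using Finset.strongInduction with
  | _ S ih =>
    intro hS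
    by_cases h : ∀ M' : Finset V, M' ⊂ S → M' ∉ F
    · exact ⟨S, subset_rfl, hS, h⟩
    · push_neg at h
      obtain ⟨M', hsub, hM'⟩ := h
      obtain ⟨M, hMs, hmin⟩ := ih M' hsub hM'
      exact ⟨M, hMs.trans hsub.subset, hmin⟩

lemma degree_eq (F : Finset (Finset V)) (hsup : SupersetClosed F)
    (S : Finset V) (hS : S ∈ F) :
    (TARGraph F).degree ⟨S, hS⟩ =
      (S.filter fun v => S.erase v ∈ F).card + (Fintype.card V - S.card) := by
  classical
  have key : ((Finset.univ : Finset V).filter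
      (fun v => (if v ∈ S then S.erase v else insert v S) ∈ F)).card
      = (TARGraph F).degree ⟨S, hS⟩ := by
    rw [SimpleGraph.degree]
    apply Finset.card_bij (fun v hv => (⟨if v ∈ S then S.erase v else insert v S,
      (Finset.mem_filter.mp hv).2⟩ : {S : Finset V // S ∈ F}))
    · intro v hv
      rw [SimpleGraph.mem_neighborFinset]
      show (symmDiff S _).card = 1
      rw [symmDiff_f]
      exact Finset.card_singleton v
    · intro v hv w hw hvw
      have h1 := symmDiff_f S v
      have h2 := symmDiff_f S w
      have hval : (if v ∈ S then S.erase v else insert v S)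
          = (if w ∈ S then S.erase w else insert w S) := congrArg Subtype.val hvw
      rw [hval, h2] at h1
      exact ((by simpa using h1 : w = v)).symm
    · intro T hT
      rw [SimpleGraph.mem_neighborFinset] at hT
      have hT' : (symmDiff S T.1).card = 1 := hT
      obtain ⟨v, hv⟩ := Finset.card_eq_one.mp hT'
      have hTv : T.1 = (if v ∈ S then S.erase v else insert v S) := by
        have h1 : symmDiff S (symmDiff S T.1) = symmDiff S {v} := by rw [hv]
        rw [symmDiff_symmDiff_cancel_left] at h1
        rw [h1, ← symmDiff_f S v, symmDiff_symmDiff_cancel_left]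
      refine ⟨v, ?_, ?_⟩
      · simp only [Finset.mem_filter, Finset.mem_univ, true_and]
        rw [← hTv]; exact T.2
      · exact Subtype.ext hTv.symm
  rw [← key]
  have hsplit : ((Finset.univ : Finset V).filter
      (fun v => (if v ∈ S then S.erase v else insert v S) ∈ F))
      = (S.filter fun v => S.erase v ∈ F) ∪ Sᶜ := by
    ext v
    by_cases hv : v ∈ S
    · simp [hv]
    · simp only [Finset.mem_filter, Finset.mem_univ, true_and, hv, if_neg,
        Finset.mem_union, Finset.mem_compl, not_false_iff, or_true, iff_true]
      exact hsup hS (Finset.subset_insert v S)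
  rw [hsplit, Finset.card_union_of_disjoint, Finset.card_compl]
  exact Finset.disjoint_left.mpr fun v hv hv' =>
    (Finset.mem_compl.mp hv') (Finset.mem_of_mem_filter v hv)

theorem stmt2 (F : Finset (Finset V)) (hne : F.Nonempty) (hsup : SupersetClosed F)
    (xbar : ℕ)
    (hxbar : IsGreatest {k : ℕ | ∃ M : Finset V, IsMinimalMem F M ∧ M.card = k} xbar) :
    (∀ (S : Finset V) (hS : S ∈ F),
      Fintype.card V - S.card ≤ (TARGraph F).degree ⟨S, hS⟩ ∧
      ((TARGraph F).degree ⟨S, hS⟩ = Fintype.card V - S.card ↔ IsMinimalMem F S)) ∧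
    (TARGraph F).minDegree = Fintype.card V - xbar := by
  classical
  have hminiff : ∀ S : Finset V, S ∈ F →
      ((S.filter fun v => S.erase v ∈ F) = ∅ ↔ IsMinimalMem F S) := by
    intro S hS
    constructor
    · intro hemp
      refine ⟨hS, fun M' hM' hM'F => ?_⟩
      obtain ⟨v, hvS, hvM'⟩ := Finset.exists_of_ssubset hM'
      have : S.erase v ∈ F := hsup hM'F (Finset.subset_erase.mpr ⟨hM'.subset, hvM'⟩)
      have : v ∈ S.filter fun v => S.erase v ∈ F := Finset.mem_filter.mpr ⟨hvS, this⟩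
      simp [hemp] at this
    · intro hmin
      rw [Finset.filter_eq_empty_iff]
      intro v hv
      exact hmin.2 _ (Finset.erase_ssubset hv)
  have part1 : ∀ (S : Finset V) (hS : S ∈ F),
      Fintype.card V - S.card ≤ (TARGraph F).degree ⟨S, hS⟩ ∧
      ((TARGraph F).degree ⟨S, hS⟩ = Fintype.card V - S.card ↔ IsMinimalMem F S) := by
    intro S hS
    rw [degree_eq F hsup S hS]
    constructor
    · omega
    · rw [← hminiff S hS, ← Finset.card_eq_zero]
      omega
  refine ⟨part1, ?_⟩
  have : Nonempty {S : Finset V // S ∈ F} := ⟨⟨hne.choose, hne.choose_spec⟩⟩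
  obtain ⟨M, hMmin, hMc⟩ := hxbar.1
  apply le_antisymm
  · have := SimpleGraph.minDegree_le_degree (TARGraph F) ⟨M, hMmin.1⟩
    rw [(part1 M hMmin.1).2.mpr hMmin, hMc] at this
    exact this
  · apply SimpleGraph.le_minDegree_of_forall_le_degree _ _
    rintro ⟨S, hS⟩
    rw [degree_eq F hsup S hS]
    obtain ⟨N, hNS, hNmin⟩ := exists_minimal S hS
    have hd : (S.filter fun v => S.erase v ∉ F) ⊆ N := by
      intro v hv
      rw [Finset.mem_filter] at hv
      by_contra hvN
      exact hv.2 (hsup hNmin.1 (Finset.subset_erase.mpr ⟨hNS, hvN⟩))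
    have h1 : (S.filter fun v => S.erase v ∉ F).card ≤ xbar :=
      le_trans (Finset.card_le_card hd) (hxbar.2 ⟨N, hNmin, rfl⟩)
    have h2 : (S.filter fun v => S.erase v ∈ F).card
        + (S.filter fun v => S.erase v ∉ F).card = S.card :=
      Finset.card_filter_add_card_filter_not (fun v => S.erase v ∈ F)
    have h3 : S.card ≤ Fintype.card V := Finset.card_le_univ S
    omega
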